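/- Let (T,r) be a metric compact, μ a Borel measure on T, Q ⊆ T compact, x_1,…,x_n ∈ T, X an L-space with convexifying operator P, and ω a modulus of continuity. For the operator Λf = ∫_Q f dμ on H^ω(T,X) with information I(f) = (P(f(x_1)),…,P(f(x_n))), the method Φ*(I(f)) = Σ_{i=1}^n P(f(x_i))·μ(T_i ∩ Q), where T_1,…,T_n is the Voronoi-type partition of T by nearest point among x_1,…,x_n, satisfies: h_X(∫_Q f dμ, Φ*(I(f))) ≤ ∫_Q min_{1≤i≤n} ω(r(x_i,t)) dμ(t) for all f ∈ H^ω(T,X). -/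

import Mathlib

structure LSpace (X : Type*) where
  add : X → X → X
  smul : ℝ → X → X
  theta : X
  h : X → X → ℝ
  add_comm : ∀ x y, add x y = add y x
  add_assoc : ∀ x y z, add x (add y z) = add (add x y) z
  add_theta : ∀ x, add x theta = x
  smul_add : ∀ (a : ℝ) x y, smul a (add x y) = add (smul a x) (smul a y)
  smul_smul : ∀ (a b : ℝ) x, smul a (smul b x) = smul (a * b) x
  one_smul : ∀ x, smul 1 x = x
  zero_smul : ∀ x, smul 0 x = theta
  h_self : ∀ x, h x x = 0
  h_comm : ∀ x y, h x y = h y x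
  h_triangle : ∀ x y z, h x z ≤ h x y + h y z
  h_eq_zero : ∀ x y, h x y = 0 → x = y
  h_smul : ∀ (a : ℝ) x y, h (smul a x) (smul a y) = |a| * h x y
  h_add_le : ∀ x y z, h (add x z) (add y z) ≤ h x y


def IsModulus (ω : ℝ → ℝ) : Prop :=
  ω 0 = 0 ∧ (∀ a b : ℝ, 0 ≤ a → a ≤ b → ω a ≤ ω b) ∧
    ContinuousOn ω (Set.Ici 0) ∧
    ∀ a b : ℝ, 0 ≤ a → 0 ≤ b → ω (a + b) ≤ ω a + ω b

def LSpace.IsConvexElem {X : Type*} (L : LSpace X) (x : X) : Prop :=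
  ∀ a b : ℝ, 0 ≤ a → 0 ≤ b → L.smul (a + b) x = L.add (L.smul a x) (L.smul b x)

structure IsConvexifying {X : Type*} (L : LSpace X) (P : X → X) : Prop where
  lipschitz : ∀ x y, L.h (P x) (P y) ≤ L.h x y
  maps_to_convex : ∀ x, L.IsConvexElem (P x)
  surj_on_convex : ∀ y, L.IsConvexElem y → ∃ x, P x = y
  idem : ∀ x, P (P x) = P x
  linear : ∀ (a b : ℝ) (x y : X),
    P (L.add (L.smul a x) (L.smul b y)) = L.add (L.smul a (P x)) (L.smul b (P y))

open MeasureTheory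

/-- Sum of a list of elements of an L-space. -/
def LSpace.lsum {X : Type*} (L : LSpace X) (l : List X) : X :=
  l.foldr L.add L.theta

/-- `T̃_i = {t : r(t,x_i) ≤ r(t,x_j) for all j ≠ i}`. -/
def Ttil {T : Type*} [MetricSpace T] {n : ℕ} (x : Fin n → T) (i : Fin n) : Set T :=
  {t | ∀ j : Fin n, j ≠ i → dist t (x i) ≤ dist t (x j)}

/-- The Voronoi-type partition: `T_1 = T̃_1`, `T_j = T̃_j \ ∪_{i<j} T̃_i`. -/
def Tvor {T : Type*} [MetricSpace T] {n : ℕ} (x : Fin n → T) (i : Fin n) : Set T :=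
  Ttil x i \ ⋃ (j : Fin n) (_ : j < i), Ttil x j

namespace LSpace

variable {X : Type*} (L : LSpace X)

lemma h_nonneg (x y : X) : 0 ≤ L.h x y := by
  have h1 := L.h_triangle x y x
  rw [L.h_self, L.h_comm y x] at h1
  linarith

lemma h_add_add (a b c d : X) :
    L.h (L.add a c) (L.add b d) ≤ L.h a b + L.h c d := by
  have h1 := L.h_triangle (L.add a c) (L.add b c) (L.add b d)
  have h2 := L.h_add_le a b c
  have h3 : L.h (L.add b c) (L.add b d) ≤ L.h c d := by
    rw [L.add_comm b c, L.add_comm b d]; exact L.h_add_le c d b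
  linarith

lemma lsum_theta : ∀ (l : List X), (∀ a ∈ l, a = L.theta) → L.lsum l = L.theta := by
  intro l
  induction l with
  | nil => intro _; rfl
  | cons a l ih =>
    intro hl
    have hc : L.lsum (a :: l) = L.add a (L.lsum l) := rfl
    rw [hc, hl a List.mem_cons_self, ih (fun b hb => hl b (List.mem_cons_of_mem _ hb)),
      L.add_theta]

lemma h_lsum_ofFn : ∀ (m : ℕ) (a b : Fin m → X),
    L.h (L.lsum (List.ofFn a)) (L.lsum (List.ofFn b)) ≤ ∑ i, L.h (a i) (b i) := by
  intro m
  induction m with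
  | zero => intro a b; simp [LSpace.lsum, L.h_self]
  | succ m ih =>
    intro a b
    rw [List.ofFn_succ, List.ofFn_succ, Fin.sum_univ_succ]
    have hc : ∀ (c : X) (l : List X), L.lsum (c :: l) = L.add c (L.lsum l) := fun _ _ => rfl
    rw [hc, hc]
    calc L.h (L.add (a 0) (L.lsum (List.ofFn fun i => a i.succ)))
          (L.add (b 0) (L.lsum (List.ofFn fun i => b i.succ)))
        ≤ L.h (a 0) (b 0) + L.h (L.lsum (List.ofFn fun i => a i.succ))
            (L.lsum (List.ofFn fun i => b i.succ)) := L.h_add_add _ _ _ _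
      _ ≤ _ := add_le_add (le_refl _) (ih _ _)

end LSpace

lemma disjoint_foldr_union {T : Type*} :
    ∀ (l : List (Set T)) (S : Set T), (∀ A ∈ l, Disjoint S A) →
      Disjoint S (l.foldr (· ∪ ·) ∅) := by
  intro l
  induction l with
  | nil => intro S _; simp
  | cons A l ih =>
    intro S h
    rw [List.foldr_cons, Set.disjoint_union_right]
    exact ⟨h A (by simp), ih S (fun B hB => h B (by simp [hB]))⟩

lemma intg_union_list {X T : Type*} (L : LSpace X) (intg : Set T → (T → X) → X)
    (hu : ∀ (S₁ S₂ : Set T) (f : T → X), Disjoint S₁ S₂ →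
      intg (S₁ ∪ S₂) f = L.add (intg S₁ f) (intg S₂ f)) (f : T → X) :
    ∀ (l : List (Set T)), l ≠ [] → l.Pairwise Disjoint →
      intg (l.foldr (· ∪ ·) ∅) f = L.lsum (l.map (fun S => intg S f)) := by
  intro l
  induction l with
  | nil => intro h; exact absurd rfl h
  | cons S l ih =>
    intro _ hp
    rcases List.pairwise_cons.mp hp with ⟨hS, hl⟩
    cases l with
    | nil =>
      show intg (S ∪ ∅) f = L.add (intg S f) L.theta
      rw [Set.union_empty, L.add_theta]
    | cons S' l' =>
      have hne : (S' :: l') ≠ [] := by simp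
      have hdisj : Disjoint S ((S' :: l').foldr (· ∪ ·) ∅) :=
        disjoint_foldr_union _ S hS
      rw [List.foldr_cons, hu _ _ f hdisj, ih hne hl]
      rfl

lemma foldr_union_ofFn {T : Type*} :
    ∀ (m : ℕ) (g : Fin m → Set T), (List.ofFn g).foldr (· ∪ ·) ∅ = ⋃ i, g i := by
  intro m
  induction m with
  | zero => intro g; simp
  | succ m ih =>
    intro g
    rw [List.ofFn_succ, List.foldr_cons, ih]
    ext t
    simp [Fin.exists_fin_succ]

theorem integral_recovery_method_error {X T : Type*}
    [MetricSpace T] [CompactSpace T] [MeasurableSpace T] [BorelSpace T]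
    (μ : Measure T)
    (L : LSpace X) (P : X → X) (hP : IsConvexifying L P)
    (Q : Set T) (hQc : IsCompact Q)
    {n : ℕ} (hn : 0 < n) (x : Fin n → T)
    (intg : Set T → (T → X) → X)
    (hint_lip : ∀ (S : Set T) (f g : T → X),
      L.h (intg S f) (intg S g) ≤ ∫ s in S, L.h (f s) (g s) ∂μ)
    (hint_const : ∀ (S : Set T) (y : X), intg S (fun _ => y) = L.smul (μ S).toReal (P y))
    (hint_union : ∀ (S₁ S₂ : Set T) (f : T → X), Disjoint S₁ S₂ →
      intg (S₁ ∪ S₂) f = L.add (intg S₁ f) (intg S₂ f))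
    (ω : ℝ → ℝ) (hω : IsModulus ω) :
    ∀ f : T → X, (∀ s s' : T, L.h (f s) (f s') ≤ ω (dist s s')) →
      L.h (intg Q f)
          (L.lsum (List.ofFn fun i =>
            L.smul (μ (Tvor x i ∩ Q)).toReal (P (f (x i)))))
        ≤ ∫ t in Q,
            (Finset.univ.inf' (Finset.univ_nonempty_iff.mpr ⟨⟨0, hn⟩⟩)
              fun i => ω (dist (x i) t)) ∂μ := by
  obtain ⟨hω0, hωmono, hωcont, -⟩ := hω
  intro f hf
  classical
  have hωnn : ∀ a : ℝ, 0 ≤ a → 0 ≤ ω a := fun a ha => hω0 ▸ hωmono 0 a le_rfl ha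
  set i₀ : Fin n := ⟨0, hn⟩ with hi₀def
  have hne : (Finset.univ : Finset (Fin n)).Nonempty := Finset.univ_nonempty_iff.mpr ⟨i₀⟩
  set G : T → ℝ := fun t => (Finset.univ.inf' (Finset.univ_nonempty_iff.mpr ⟨⟨0, hn⟩⟩)
      fun i => ω (dist (x i) t)) with hGdef
  set U : Fin n → Set T := fun i => Tvor x i ∩ Q with hUdef
  -- basic facts about G
  have hGnn : ∀ t, 0 ≤ G t := by
    intro t
    exact Finset.le_inf' _ _ fun i _ => hωnn _ dist_nonneg
  have hgcont : ∀ i : Fin n, Continuous fun t => ω (dist (x i) t) := by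
    intro i
    exact hωcont.comp_continuous (continuous_const.dist continuous_id)
      fun t => dist_nonneg
  have hGcont : Continuous G := by
    rw [continuous_iff_continuousAt]
    intro t
    exact ContinuousAt.finset_inf'_apply _ fun i _ => (hgcont i).continuousAt
  -- measurability of the pieces
  have hTtilc : ∀ i, IsClosed (Ttil x i) := by
    intro i
    have : Ttil x i = ⋂ j, ⋂ (_ : j ≠ i), {t | dist t (x i) ≤ dist t (x j)} := by
      ext t; simp [Ttil]
    rw [this]
    exact isClosed_iInter fun j => isClosed_iInter fun _ =>
      isClosed_le (continuous_id.dist continuous_const) (continuous_id.dist continuous_const)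
  have hTvorm : ∀ i, MeasurableSet (Tvor x i) := fun i =>
    ((hTtilc i).measurableSet).diff
      (MeasurableSet.iUnion fun j => MeasurableSet.iUnion fun _ => (hTtilc j).measurableSet)
  have hQm : MeasurableSet Q := hQc.isClosed.measurableSet
  have hUm : ∀ i, MeasurableSet (U i) := fun i => (hTvorm i).inter hQm
  -- the Voronoi sets cover T
  have hTvorU : (⋃ i, Tvor x i) = Set.univ := by
    ext t
    simp only [Set.mem_iUnion, Set.mem_univ, iff_true]
    have hsne : (Finset.univ.filter fun i => t ∈ Ttil x i).Nonempty := by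
      obtain ⟨b, -, hb⟩ := Finset.exists_min_image Finset.univ (fun i => dist t (x i)) hne
      refine ⟨b, Finset.mem_filter.mpr ⟨Finset.mem_univ _, ?_⟩⟩
      intro j _
      exact hb j (Finset.mem_univ j)
    set j₀ := (Finset.univ.filter fun i => t ∈ Ttil x i).min' hsne with hj₀def
    refine ⟨j₀, (Finset.mem_filter.mp (Finset.min'_mem _ hsne)).2, ?_⟩
    simp only [Set.mem_iUnion]
    rintro ⟨j, hj, htj⟩
    have : j₀ ≤ j := Finset.min'_le _ j (Finset.mem_filter.mpr ⟨Finset.mem_univ _, htj⟩)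
    exact absurd hj (not_lt.mpr this)
  have hUQ : (⋃ i, U i) = Q := by
    rw [hUdef]
    simp only []
    rw [← Set.iUnion_inter, hTvorU, Set.univ_inter]
  -- disjointness
  have hTvord : ∀ i j : Fin n, i ≠ j → Disjoint (Tvor x i) (Tvor x j) := by
    have key : ∀ i j : Fin n, i < j → Disjoint (Tvor x i) (Tvor x j) := by
      intro i j hij
      rw [Set.disjoint_left]
      intro t hti htj
      have h1 : t ∈ Ttil x i := hti.1
      exact htj.2 (Set.mem_iUnion.mpr ⟨i, Set.mem_iUnion.mpr ⟨hij, h1⟩⟩)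
    intro i j hij
    rcases lt_or_gt_of_ne hij with h | h
    · exact key i j h
    · exact (key j i h).symm
  have hUd : ∀ i j : Fin n, i ≠ j → Disjoint (U i) (U j) := fun i j hij =>
    (hTvord i j hij).mono Set.inter_subset_left Set.inter_subset_left
  -- pointwise bound on each piece
  have hφle : ∀ i : Fin n, ∀ t ∈ Tvor x i, L.h (f t) (f (x i)) ≤ G t := by
    intro i t ht
    have h1 : L.h (f t) (f (x i)) ≤ ω (dist t (x i)) := hf t (x i)
    refine h1.trans (Finset.le_inf' _ _ fun j _ => ?_)
    rcases eq_or_ne j i with rfl | hji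
    · rw [dist_comm]
    · have := ht.1 j hji
      rw [dist_comm (x j) t]
      exact hωmono _ _ dist_nonneg this
  by_cases hGint : IntegrableOn G Q μ
  · -- main case: G integrable on Q
    have key : ∀ i : Fin n,
        L.h (intg (U i) f) (L.smul (μ (U i)).toReal (P (f (x i)))) ≤ ∫ t in U i, G t ∂μ := by
      intro i
      rw [← hint_const]
      refine (hint_lip _ _ _).trans ?_
      refine integral_mono_of_nonneg (Filter.Eventually.of_forall fun t => L.h_nonneg _ _)
        (hGint.mono_set Set.inter_subset_right) ?_
      refine (ae_restrict_iff' (hUm i)).mpr (Filter.Eventually.of_forall fun t ht => ?_)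
      exact hφle i t ht.1
    have hlist : intg Q f = L.lsum (List.ofFn fun i => intg (U i) f) := by
      have h1 : ((List.ofFn U).foldr (· ∪ ·) ∅) = Q := by
        rw [foldr_union_ofFn, hUQ]
      have h2 : (List.ofFn U) ≠ [] := by
        intro h
        have := congrArg List.length h
        simp at this
        omega
      have h3 : (List.ofFn U).Pairwise Disjoint :=
        List.pairwise_ofFn.mpr fun i j hij => hUd i j (ne_of_lt hij)
      rw [← h1, intg_union_list L intg hint_union f _ h2 h3, List.map_ofFn]
      rfl
    rw [hlist]
    calc L.h (L.lsum (List.ofFn fun i => intg (U i) f))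
          (L.lsum (List.ofFn fun i => L.smul (μ (Tvor x i ∩ Q)).toReal (P (f (x i)))))
        ≤ ∑ i, L.h (intg (U i) f) (L.smul (μ (U i)).toReal (P (f (x i)))) :=
          L.h_lsum_ofFn n _ _
      _ ≤ ∑ i, ∫ t in U i, G t ∂μ := Finset.sum_le_sum fun i _ => key i
      _ = ∫ t in Q, G t ∂μ := by
          have := integral_biUnion_finset (f := G) (μ := μ) Finset.univ
            (fun i _ => hUm i)
            (fun i _ j _ hij => hUd i j hij)
            (fun i _ => hGint.mono_set (Set.inter_subset_right))
          have huQ : (⋃ i ∈ (Finset.univ : Finset (Fin n)), U i) = Q := by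
            simpa using hUQ
          rw [huQ] at this
          exact this.symm
  · -- degenerate case: G not integrable on Q
    have hμQ : μ Q = ⊤ := by
      by_contra hfin
      apply hGint
      have hfm : IsFiniteMeasure (μ.restrict Q) :=
        ⟨by rwa [Measure.restrict_apply_univ, lt_top_iff_ne_top]⟩
      have : Nonempty T := ⟨x i₀⟩
      obtain ⟨t₀, -, ht₀⟩ := isCompact_univ.exists_isMaxOn Set.univ_nonempty
        hGcont.continuousOn
      refine (integrable_const (G t₀)).mono' hGcont.aestronglyMeasurable
        (Filter.Eventually.of_forall fun t => ?_)
      rw [Real.norm_eq_abs, abs_of_nonneg (hGnn t)]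
      exact ht₀ (Set.mem_univ t)
    have hRHS : ∫ t in Q, G t ∂μ = 0 := integral_undef hGint
    rw [hRHS]
    -- some piece has infinite measure
    obtain ⟨j, hj⟩ : ∃ j : Fin n, μ (U j) = ⊤ := by
      by_contra hc
      push_neg at hc
      have h1 : μ Q ≤ ∑ i, μ (U i) := by
        rw [← hUQ]
        exact (measure_iUnion_le U).trans_eq (tsum_fintype _)
      have h2 : ∑ i, μ (U i) < ⊤ := ENNReal.sum_lt_top.mpr fun i _ =>
        lt_top_iff_ne_top.mpr (hc i)
      rw [hμQ] at h1
      exact absurd (h1.trans_lt h2) (lt_irrefl _)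
    -- every term in the method is theta
    have hterm : ∀ i : Fin n, L.smul (μ (U i)).toReal (P (f (x i))) = L.theta := by
      intro i
      by_cases hμi : μ (U i) = ⊤
      · rw [hμi, ENNReal.toReal_top, L.zero_smul]
      · have hij : i ≠ j := by rintro rfl; exact hμi hj
        have hdisj : Disjoint (U j) (U i) := hUd j i (Ne.symm hij)
        have h1 := hint_union (U j) (U i) (fun _ => f (x i)) hdisj
        rw [hint_const, hint_const, hint_const] at h1
        have hμu : μ (U j ∪ U i) = ⊤ :=
          eq_top_mono (measure_mono Set.subset_union_left) hj
        rw [hμu, hj, ENNReal.toReal_top, L.zero_smul, L.add_comm, L.add_theta] at h1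
        exact h1.symm
    have hΦ : L.lsum (List.ofFn fun i =>
        L.smul (μ (Tvor x i ∩ Q)).toReal (P (f (x i)))) = L.theta := by
      refine L.lsum_theta _ ?_
      intro a ha
      rw [List.mem_ofFn] at ha
      obtain ⟨i, rfl⟩ := ha
      exact hterm i
    rw [hΦ]
    -- show `h (intg Q f) theta ≤ 0`
    have key : ∀ y : X, L.h (intg Q f) L.theta ≤ ∫ t in Q, L.h (f t) y ∂μ := by
      intro y
      have h1 := hint_lip Q f (fun _ => y)
      rwa [hint_const, hμQ, ENNReal.toReal_top, L.zero_smul] at h1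
    by_cases hz : ∀ t, L.h (f t) (f (x i₀)) = 0
    · have h0 : ∫ t in Q, L.h (f t) (f (x i₀)) ∂μ = 0 := by
        simp only [hz]
        exact integral_zero _ _
      exact (key _).trans h0.le
    · push_neg at hz
      obtain ⟨s₀, hs₀⟩ := hz
      by_cases h1 : IntegrableOn (fun t => L.h (f t) (f (x i₀))) Q μ
      · by_cases h2 : IntegrableOn (fun t => L.h (f t) (f s₀)) Q μ
        · exfalso
          have hsum : Integrable
              (fun t => L.h (f t) (f (x i₀)) + L.h (f t) (f s₀)) (μ.restrict Q) := h1.add h2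
          have hconst : Integrable (fun _ : T => L.h (f s₀) (f (x i₀))) (μ.restrict Q) := by
            refine hsum.mono' aestronglyMeasurable_const
              (Filter.Eventually.of_forall fun t => ?_)
            rw [Real.norm_eq_abs, abs_of_nonneg (L.h_nonneg _ _)]
            calc L.h (f s₀) (f (x i₀))
                ≤ L.h (f s₀) (f t) + L.h (f t) (f (x i₀)) := L.h_triangle _ _ _
              _ = L.h (f t) (f (x i₀)) + L.h (f t) (f s₀) := by
                  rw [L.h_comm (f s₀) (f t)]; ring
          rw [integrable_const_iff] at hconst
          rcases hconst with hzero | hfin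
          · exact hs₀ hzero
          · have hfin := hfin.measure_univ_lt_top; rw [Measure.restrict_apply_univ, hμQ] at hfin
            exact absurd hfin (lt_irrefl _)
        · exact (key (f s₀)).trans (integral_undef h2).le
      · exact (key (f (x i₀))).trans (integral_undef h1).le
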